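/- For any real number epsilon > 0 and any natural number g, the sum over all n in Z^g of the product over i = 1..g of exp(-pi * epsilon * (n_i + b_i)^2) is at most (2 / (1 - exp(-pi * epsilon)))^g, for any real vector b in [0,1)^g. -/

import Mathlib

open Real

section Aux

private noncomputable def G (r : ℝ) : ℤ → ℝ := Int.rec (fun k => r ^ k) (fun k => r ^ k)

private lemma hasSum_G {r : ℝ} (h0 : 0 ≤ r) (h1 : r < 1) :
    HasSum (G r) (2 / (1 - r)) := by
  have := (hasSum_geometric_of_lt_one h0 h1).int_rec (hasSum_geometric_of_lt_one h0 h1)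
  have h2 : (1 - r)⁻¹ + (1 - r)⁻¹ = 2 / (1 - r) := by ring
  simp only [h2] at this; exact this

private lemma factor_le_G {ε b : ℝ} (hε : 0 < ε) (hb0 : 0 ≤ b) (hb1 : b < 1) (n : ℤ) :
    Real.exp (-π * ε * ((n : ℝ) + b) ^ 2) ≤ G (Real.exp (-π * ε)) n := by
  have hπε : 0 < π * ε := mul_pos pi_pos hε
  cases n with
  | ofNat k =>
    have hk : ((k : ℝ)) ≤ ((k : ℝ) + b) ^ 2 := by
      calc (k : ℝ) ≤ (k : ℝ) ^ 2 := by
            rcases Nat.eq_zero_or_pos k with hk0 | hk0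
            · simp [hk0]
            · have : (1 : ℝ) ≤ (k : ℝ) := by exact_mod_cast hk0
              nlinarith
        _ ≤ ((k : ℝ) + b) ^ 2 := by nlinarith [Nat.cast_nonneg (α := ℝ) k]
    have : Real.exp (-π * ε * ((k : ℝ) + b) ^ 2) ≤ Real.exp (-(π * ε) * k) := by
      apply Real.exp_le_exp.2; nlinarith
    refine this.trans_eq ?_
    show Real.exp (-(π * ε) * k) = Real.exp (-π * ε) ^ k
    rw [← Real.exp_nat_mul]; ring_nf
  | negSucc k =>
    have hcast : ((Int.negSucc k : ℤ) : ℝ) = -(k : ℝ) - 1 := by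
      push_cast [Int.negSucc_eq]; ring
    have hk : ((k : ℝ)) ≤ (-(k : ℝ) - 1 + b) ^ 2 := by
      have h1 : ((k : ℝ)) ≤ (k : ℝ) ^ 2 := by
        rcases Nat.eq_zero_or_pos k with hk0 | hk0
        · simp [hk0]
        · have : (1 : ℝ) ≤ (k : ℝ) := by exact_mod_cast hk0
          nlinarith
      have hkn : (0 : ℝ) ≤ (k : ℝ) := Nat.cast_nonneg k
      nlinarith
    have : Real.exp (-π * ε * (((Int.negSucc k : ℤ) : ℝ) + b) ^ 2)
        ≤ Real.exp (-(π * ε) * k) := by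
      apply Real.exp_le_exp.2; rw [hcast]; nlinarith
    refine this.trans_eq ?_
    show Real.exp (-(π * ε) * k) = Real.exp (-π * ε) ^ k
    rw [← Real.exp_nat_mul]; ring_nf

private lemma factor_bound {ε : ℝ} (hε : 0 < ε) {b : ℝ} (hb : b ∈ Set.Ico (0 : ℝ) 1) :
    Summable (fun n : ℤ => Real.exp (-π * ε * ((n : ℝ) + b) ^ 2)) ∧
    (∑' n : ℤ, Real.exp (-π * ε * ((n : ℝ) + b) ^ 2)) ≤ 2 / (1 - Real.exp (-π * ε)) := by
  have hr0 : (0 : ℝ) ≤ Real.exp (-π * ε) := (Real.exp_pos _).le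
  have hr1 : Real.exp (-π * ε) < 1 := by
    rw [Real.exp_lt_one_iff]; nlinarith [pi_pos]
  have hG := hasSum_G hr0 hr1
  have hle := fun n => factor_le_G hε hb.1 hb.2 n
  have hsum : Summable (fun n : ℤ => Real.exp (-π * ε * ((n : ℝ) + b) ^ 2)) :=
    Summable.of_nonneg_of_le (fun n => (Real.exp_pos _).le) hle hG.summable
  exact ⟨hsum, (Summable.tsum_le_tsum hle hsum hG.summable).trans_eq hG.tsum_eq⟩

private lemma hasSum_pi_prod (g : ℕ) (h : Fin g → ℤ → ℝ)
    (hnn : ∀ i n, 0 ≤ h i n) (hs : ∀ i, Summable (h i)) :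
    HasSum (fun n : Fin g → ℤ => ∏ i, h i (n i)) (∏ i, ∑' m : ℤ, h i m) := by
  induction g with
  | zero =>
    simp only [Finset.univ_eq_empty, Finset.prod_empty]
    simpa using hasSum_single (f := fun _ : Fin 0 → ℤ => (1 : ℝ)) default
      fun b hb => absurd (Subsingleton.elim b default) hb
  | succ g ih =>
    have hF := ih (fun i => h i.succ) (fun i n => hnn i.succ n) (fun i => hs i.succ)
    have h1 : (0 : ℤ → ℝ) ≤ h 0 := fun n => hnn 0 n
    have h2 : (0 : (Fin g → ℤ) → ℝ) ≤ fun m => ∏ i : Fin g, h i.succ (m i) :=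
      fun m => Finset.prod_nonneg fun i _ => hnn _ _
    have hprod := Summable.mul_of_nonneg (hs 0) hF.summable h1 h2
    have hmul := (hs 0).hasSum.mul hF hprod
    beta_reduce at hmul
    have hkey : (fun p : ℤ × (Fin g → ℤ) => h 0 p.1 * ∏ i : Fin g, h i.succ (p.2 i))
        = (fun n : Fin (g + 1) → ℤ => ∏ i, h i (n i)) ∘
          (Fin.consEquiv (fun _ : Fin (g + 1) => ℤ)) := by
      funext p
      simp only [Function.comp_apply]
      rw [Fin.prod_univ_succ]
      simp [Fin.consEquiv]
    rw [hkey] at hmul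
    rw [Fin.prod_univ_succ]
    exact ((Fin.consEquiv (fun _ : Fin (g + 1) => ℤ)).hasSum_iff).1 hmul

end Aux

theorem theta_tail_sum_bound (g : ℕ) (ε : ℝ) (hε : 0 < ε) (b : Fin g → ℝ)
    (hb : ∀ i, b i ∈ Set.Ico (0 : ℝ) 1) :
    (∑' n : Fin g → ℤ, ∏ i, Real.exp (-π * ε * ((n i : ℝ) + b i) ^ 2))
      ≤ (2 / (1 - Real.exp (-π * ε))) ^ g := by
  set h : Fin g → ℤ → ℝ := fun i n => Real.exp (-π * ε * ((n : ℝ) + b i) ^ 2) with hh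
  have hnn : ∀ i n, 0 ≤ h i n := fun i n => (Real.exp_pos _).le
  have hfb : ∀ i : Fin g, Summable (h i) ∧ (∑' m : ℤ, h i m) ≤ 2 / (1 - Real.exp (-π * ε)) :=
    fun i => factor_bound hε (hb i)
  have hpi := hasSum_pi_prod g h hnn (fun i => (hfb i).1)
  rw [hpi.tsum_eq]
  calc (∏ i, ∑' m : ℤ, h i m) ≤ ∏ _i : Fin g, (2 / (1 - Real.exp (-π * ε))) :=
        Finset.prod_le_prod (fun i _ => tsum_nonneg fun m => hnn i m)
          (fun i _ => (hfb i).2)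
    _ = (2 / (1 - Real.exp (-π * ε))) ^ g := by
        rw [Finset.prod_const, Finset.card_univ, Fintype.card_fin]
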